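/- One step of the 2-D Rouy–Tourin dilation scheme satisfies the maximum–minimum principle under the time step restriction τ ≤ h/√2: if u^{k+1}_{i,j} = u^k_{i,j} + τ·sqrt( max{0, (u^k_{i+1,j}−u^k_{i,j})/h, (u^k_{i−1,j}−u^k_{i,j})/h}² + max{0, (u^k_{i,j+1}−u^k_{i,j})/h, (u^k_{i,j−1}−u^k_{i,j})/h}² ), then min u^k ≤ u^{k+1}_{i,j} ≤ max u^k for all (i,j). -/

import Mathlib

/-- One step of the 2-D Rouy–Tourin dilation scheme satisfies the
maximum–minimum principle under the time step restriction `τ ≤ h/√2`. -/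
theorem rouy_tourin_2d_max_min (u v : ℤ × ℤ → ℝ)
    (hbdd : BddAbove (Set.range u)) (hbdd' : BddBelow (Set.range u))
    (h τ : ℝ) (hh : 0 < h) (hτ : 0 < τ) (hτh : τ ≤ h / Real.sqrt 2)
    (hv : ∀ i j, v (i, j) = u (i, j) + τ * Real.sqrt
      ((max 0 (max ((u (i + 1, j) - u (i, j)) / h) ((u (i - 1, j) - u (i, j)) / h))) ^ 2 +
       (max 0 (max ((u (i, j + 1) - u (i, j)) / h) ((u (i, j - 1) - u (i, j)) / h))) ^ 2)) :
    ∀ i j, sInf (Set.range u) ≤ v (i, j) ∧ v (i, j) ≤ sSup (Set.range u) := by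
  intro i j
  have hM : ∀ p, u p ≤ sSup (Set.range u) := fun p => le_csSup hbdd ⟨p, rfl⟩
  have hm : ∀ p, sInf (Set.range u) ≤ u p := fun p => csInf_le hbdd' ⟨p, rfl⟩
  set M := sSup (Set.range u) with hMdef
  set d : ℝ := (M - u (i, j)) / h with hd
  have hd0 : 0 ≤ d := div_nonneg (by linarith [hM (i, j)]) hh.le
  set A : ℝ := max 0 (max ((u (i + 1, j) - u (i, j)) / h) ((u (i - 1, j) - u (i, j)) / h))
  set B : ℝ := max 0 (max ((u (i, j + 1) - u (i, j)) / h) ((u (i, j - 1) - u (i, j)) / h))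
  have hA0 : 0 ≤ A := le_max_left _ _
  have hB0 : 0 ≤ B := le_max_left _ _
  have key : ∀ p : ℤ × ℤ, (u p - u (i, j)) / h ≤ d := fun p =>
    (div_le_div_iff_of_pos_right hh).mpr (by linarith [hM p])
  have hAd : A ≤ d := max_le hd0 (max_le (key _) (key _))
  have hBd : B ≤ d := max_le hd0 (max_le (key _) (key _))
  have hsqrt0 : 0 ≤ Real.sqrt (A ^ 2 + B ^ 2) := Real.sqrt_nonneg _
  constructor
  · rw [hv i j]
    have := hm (i, j)
    nlinarith
  · rw [hv i j]
    have hle : Real.sqrt (A ^ 2 + B ^ 2) ≤ Real.sqrt 2 * d := by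
      have h1 : A ^ 2 + B ^ 2 ≤ 2 * d ^ 2 := by nlinarith
      calc Real.sqrt (A ^ 2 + B ^ 2) ≤ Real.sqrt (2 * d ^ 2) := Real.sqrt_le_sqrt h1
        _ = Real.sqrt 2 * d := by
            rw [Real.sqrt_mul (by norm_num), Real.sqrt_sq hd0]
    have hs2 : (0:ℝ) < Real.sqrt 2 := by positivity
    have h2 : τ * Real.sqrt (A ^ 2 + B ^ 2) ≤ (h / Real.sqrt 2) * (Real.sqrt 2 * d) := by
      apply mul_le_mul hτh hle hsqrt0 (by positivity)
    have h3 : (h / Real.sqrt 2) * (Real.sqrt 2 * d) = M - u (i, j) := by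
      field_simp [hd]
      rw [hd]
      field_simp
    linarith
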